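/- Let k be an algebraically closed field, let A be a d×m integer matrix of rank d, and let D be an (m−d)×m integer matrix whose rows form a ℤ-basis of the lattice {u ∈ ℤ^m : Au = 0}. Grade the Laurent polynomial ring k[x_1^{±1},…,x_m^{±1}] over ℤ^d by declaring the monomial x^u to have degree Au, let I be a homogeneous ideal of k[x_1^{±1},…,x_m^{±1}], and let φ : k[z_1^{±1},…,z_{m−d}^{±1}] → k[x_1^{±1},…,x_m^{±1}] be the k-algebra homomorphism with φ(z_i) = ∏_{j=1}^m x_j^{D_{ij}}. Then the degree-zero subalgebra of k[x_1^{±1},…,x_m^{±1}]/I (with its induced ℤ^d-grading) is isomorphic as a k-algebra to k[z_1^{±1},…,z_{m−d}^{±1}]/φ^{-1}(I). -/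

import Mathlib

/-- Let `k` be an algebraically closed field, `A` a `d × m` integer
matrix of rank `d`, and `D` an `(m-d) × m` integer matrix whose rows form a ℤ-basis of
`{u ∈ ℤ^m : Au = 0}`.  Grade the Laurent polynomial ring
`k[x₁^{±1}, …, x_m^{±1}] = k[ℤ^m]` by `deg (x^u) = Au ∈ ℤ^d`, let `I` be a homogeneous
ideal, and let `φ : k[z₁^{±1}, …, z_{m-d}^{±1}] → k[x₁^{±1}, …, x_m^{±1}]` be the
`k`-algebra map with `φ(z_i) = ∏_j x_j^{D i j}` (i.e. `φ(z^v) = x^{vD}` on monomials).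
Then the degree-zero subalgebra of `k[x^{±1}]/I` (the image of the degree-zero
subalgebra `S₀` in the quotient) is isomorphic as a `k`-algebra to
`k[z^{±1}]/φ⁻¹(I)`. -/
theorem degree_zero_part_of_torus_quotient
    {k : Type*} [Field k] [IsAlgClosed k]
    (d m : ℕ) (hdm : d ≤ m)
    (A : Matrix (Fin d) (Fin m) ℤ) (hrank : A.rank = d)
    (D : Matrix (Fin (m - d)) (Fin m) ℤ)
    (hDinj : Function.Injective D.vecMulLinear)
    (hDspan : LinearMap.range D.vecMulLinear = LinearMap.ker A.mulVecLin)
    (I : Ideal (AddMonoidAlgebra k (Fin m → ℤ)))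
    (hI : ∃ Gens : Set (AddMonoidAlgebra k (Fin m → ℤ)),
      (∀ f ∈ Gens, ∃ a : Fin d → ℤ, ∀ u ∈ f.coeff.support, A.mulVec u = a) ∧
      I = Ideal.span Gens)
    (φ : AddMonoidAlgebra k (Fin (m - d) → ℤ) →ₐ[k] AddMonoidAlgebra k (Fin m → ℤ))
    (hφ : ∀ v : Fin (m - d) → ℤ,
      φ (AddMonoidAlgebra.single v 1) = AddMonoidAlgebra.single (Matrix.vecMul v D) 1)
    (S₀ : Subalgebra k (AddMonoidAlgebra k (Fin m → ℤ)))
    (hS₀ : ∀ f, f ∈ S₀ ↔ ∀ u ∈ f.coeff.support, A.mulVec u = 0) :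
    Nonempty ((S₀.map (Ideal.Quotient.mkₐ k I)) ≃ₐ[k]
      (AddMonoidAlgebra k (Fin (m - d) → ℤ) ⧸ I.comap φ)) := by
  classical
  have hsingle : ∀ (v : Fin (m - d) → ℤ) (c : k),
      φ (AddMonoidAlgebra.single v c) = AddMonoidAlgebra.single (Matrix.vecMul v D) c := by
    intro v c
    have h1 : AddMonoidAlgebra.single v c = c • AddMonoidAlgebra.single v (1 : k) := by
      rw [AddMonoidAlgebra.smul_single, smul_eq_mul, mul_one]
    rw [h1, map_smul φ, hφ, AddMonoidAlgebra.smul_single, smul_eq_mul, mul_one]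
  -- the range of `φ` is exactly `S₀`
  have hrange : φ.range = S₀ := by
    apply le_antisymm
    · rintro x ⟨g, rfl⟩
      induction g using AddMonoidAlgebra.induction with
      | zero => simpa using S₀.zero_mem
      | single_add a b f _ _ ih =>
        rw [map_add]
        refine S₀.add_mem ?_ ih
        show φ (AddMonoidAlgebra.single a b) ∈ S₀
        rw [hsingle]
        rw [hS₀]
        intro u hu
        have hu' : u = Matrix.vecMul a D := by
          by_cases hb : b = 0
          · simp [hb] at hu
          · simpa [AddMonoidAlgebra.coeff_single, Finsupp.support_single_ne_zero _ hb] using hu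
        subst hu'
        have : D.vecMulLinear a ∈ LinearMap.ker A.mulVecLin := by
          rw [← hDspan]; exact ⟨a, rfl⟩
        simpa [Matrix.vecMulLinear_apply, Matrix.mulVecLin_apply] using this
    · intro f hf
      rw [hS₀] at hf
      rw [← AddMonoidAlgebra.sum_coeff_single f]
      apply Subalgebra.sum_mem
      intro u hu
      have h0 : u ∈ LinearMap.ker A.mulVecLin := by
        simpa [Matrix.mulVecLin_apply] using hf u hu
      rw [← hDspan] at h0
      obtain ⟨v, hv⟩ := h0
      refine ⟨AddMonoidAlgebra.single v (f.coeff u), ?_⟩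
      show φ (AddMonoidAlgebra.single v (f.coeff u)) = _
      rw [hsingle, ← Matrix.vecMulLinear_apply, hv]
  -- apply the first isomorphism theorem to `mkₐ ∘ φ`
  set ψ : AddMonoidAlgebra k (Fin (m - d) → ℤ) →ₐ[k] (AddMonoidAlgebra k (Fin m → ℤ) ⧸ I) :=
    (Ideal.Quotient.mkₐ k I).comp φ with hψ
  have hker : RingHom.ker ψ = I.comap φ := by
    ext x
    rw [RingHom.mem_ker, Ideal.mem_comap, hψ]
    simp only [AlgHom.comp_apply, Ideal.Quotient.mkₐ_eq_mk]
    exact Ideal.Quotient.eq_zero_iff_mem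
  have hrg : ψ.range = S₀.map (Ideal.Quotient.mkₐ k I) := by
    rw [hψ, AlgHom.range_comp, hrange]
  exact ⟨((Ideal.quotientEquivAlgOfEq k (hker.symm)).trans
    ((Ideal.quotientKerEquivRange ψ).trans (Subalgebra.equivOfEq _ _ hrg))).symm⟩
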